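/- Let d ≥ 1 and k ≥ 1 be integers, let n ≥ dk, and let λ be a partition of dk with λ₁ = d (exactly d columns); let λ' = (λ₂, λ₃, …) be λ with its first row removed, and pad λ and λ' with zeros to length n. For r ≥ 0 let E_r be the list of all squarefree monomials of degree r in x₁,…,x_n (products of r distinct variables). Then [Δ(x) · e_d(E_k)]_{(λ_j + n − j)_{j=1}^{n}} = [Δ(x) · e_d(E_{k−1})]_{(λ'_j + n − j)_{j=1}^{n}}; that is, the multiplicity of S^λ in Λ^d(Λ^k W) equals the multiplicity of S^{λ'} in Λ^d(Λ^{k−1} W). -/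

import Mathlib

open MvPolynomial Finset

noncomputable section

/-- Complete homogeneous symmetric polynomial `h_d` evaluated at the family `y i`, `i ∈ s`:
the sum, over all multisets of size `d` with elements in `s`, of the corresponding products. -/
def hSum {ι : Type*} [DecidableEq ι] {R : Type*} [CommRing R]
    (d : ℕ) (s : Finset ι) (y : ι → R) : R :=
  ∑ t ∈ s.sym d, ((t : Multiset ι).map y).prod

/-- Elementary symmetric polynomial `e_d` evaluated at the family `y i`, `i ∈ s`. -/
def eSum {ι : Type*} [DecidableEq ι] {R : Type*} [CommRing R]
    (d : ℕ) (s : Finset ι) (y : ι → R) : R :=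
  ∑ t ∈ s.powersetCard d, ∏ i ∈ t, y i

/-- The monomial `x^c` in `m` variables. -/
def monom (m : ℕ) (c : Fin m → ℕ) : MvPolynomial (Fin m) ℤ := ∏ j, X j ^ c j

/-- `h_d` applied to the list of all monomials of degree `k` in `m` variables:
the character of `S^d(S^k W)` for `dim W = m`. -/
def charS (d k m : ℕ) : MvPolynomial (Fin m) ℤ :=
  hSum d (Finset.Nat.antidiagonalTuple m k) (monom m)

/-- `e_d` applied to the list of all monomials of degree `k` in `m` variables:
the character of `Λ^d(S^k W)` for `dim W = m`. -/
def charW (d k m : ℕ) : MvPolynomial (Fin m) ℤ :=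
  eSum d (Finset.Nat.antidiagonalTuple m k) (monom m)

/-- `h_k(x_1,…,x_m)`. -/
def hpoly (m k : ℕ) : MvPolynomial (Fin m) ℤ :=
  ∑ c ∈ Finset.Nat.antidiagonalTuple m k, monom m c

/-- `h_k(x_1^r,…,x_m^r)`. -/
def hkPow (m k r : ℕ) : MvPolynomial (Fin m) ℤ :=
  ∑ c ∈ Finset.Nat.antidiagonalTuple m k, ∏ j, X j ^ (r * c j)

/-- The Vandermonde product `Δ(x) = ∏_{i<j} (x_i - x_j)`. -/
def vand (m : ℕ) : MvPolynomial (Fin m) ℤ :=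
  ∏ p ∈ (Finset.univ : Finset (Fin m × Fin m)).filter (fun p => p.1 < p.2),
    (X p.1 - X p.2)

/-- The coefficient of the monomial with exponent vector `e`. -/
def coeffOf {m : ℕ} (e : Fin m → ℕ) (P : MvPolynomial (Fin m) ℤ) : ℤ :=
  MvPolynomial.coeff (Finsupp.equivFunOnFinite.symm e) P

/-- `N_α(k; μ)`: the number of `(α,μ)`-matrices, i.e. of nonnegative integral `a × m`
matrices all of whose row sums are `k` and whose `α`-weighted column sums are `μ`. -/
def Nmat {a m : ℕ} (α : Fin a → ℕ) (k : ℕ) (μ : Fin m → ℤ) : ℕ :=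
  Set.ncard {M : Fin a → Fin m → ℕ |
    (∀ i, ∑ j, M i j = k) ∧ ∀ j, ∑ i, (α i : ℤ) * (M i j : ℤ) = μ j}

/-- `N_α(k; μ)` for `α` given as a list. -/
def NmatL (αs : List ℕ) {m : ℕ} (k : ℕ) (μ : Fin m → ℤ) : ℕ :=
  Nmat (fun i : Fin αs.length => αs.get i) k μ

/-- `D_ρ`: the number of permutations in `S_d` of cycle type `ρ` (a partition of `d`);
Mathlib's `cycleType` records only the cycles of length at least 2. -/
def Dnum (d : ℕ) (ρ : Nat.Partition d) : ℕ :=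
  ((Finset.univ : Finset (Equiv.Perm (Fin d))).filter
    (fun σ => σ.cycleType = ρ.parts.filter (fun r => 2 ≤ r))).card

/-- `e_d` applied to the list of all squarefree monomials of degree `r` in `n` variables:
the character of `Λ^d(Λ^r W)` for `dim W = n`. -/
def charEE (n d r : ℕ) : MvPolynomial (Fin n) ℤ :=
  eSum d (Finset.powersetCard r (Finset.univ : Finset (Fin n)))
    (fun S => ∏ i ∈ S, X i)


open Equiv

lemma negOneVal {n : ℕ} [NeZero n] : ((-1 : Fin n) : ℕ) = n - 1 := by
  have h : 0 < n := Nat.pos_of_ne_zero (NeZero.ne n)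
  rw [Fin.coe_neg, Fin.val_one']
  rcases Nat.lt_or_ge 1 n with h2 | h2
  · rw [Nat.mod_eq_of_lt h2, Nat.mod_eq_of_lt (by omega)]
  · interval_cases n
    simp

lemma valAddOne {n : ℕ} [NeZero n] {m : Fin n} (h : m ≠ -1) :
    ((m + 1 : Fin n) : ℕ) = (m : ℕ) + 1 := by
  have h1 : 0 < n := Nat.pos_of_ne_zero (NeZero.ne n)
  have h2 : (m : ℕ) ≠ n - 1 := fun hc => h (Fin.ext (by rw [negOneVal]; exact hc))
  have h3 := m.isLt
  rw [Fin.val_add, Fin.val_one']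
  rcases Nat.lt_or_ge 1 n with h4 | h4
  · rw [Nat.mod_eq_of_lt h4, Nat.mod_eq_of_lt (by omega)]
  · omega

lemma valSubOne {n : ℕ} [NeZero n] {x : Fin n} (h : x ≠ 0) :
    ((x - 1 : Fin n) : ℕ) = (x : ℕ) - 1 := by
  have h1 : 0 < n := Nat.pos_of_ne_zero (NeZero.ne n)
  have h2 : (x : ℕ) ≠ 0 := fun hc => h (Fin.ext hc)
  have h3 := x.isLt
  rw [Fin.sub_def, Fin.val_one']
  rcases Nat.lt_or_ge 1 n with h4 | h4
  · simp only []
    rw [Nat.mod_eq_of_lt h4]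
    have h5 : n - 1 + (x : ℕ) = ((x : ℕ) - 1) + n := by omega
    rw [h5, Nat.add_mod_right, Nat.mod_eq_of_lt (by omega)]
  · omega

lemma pair_prod (m : ℕ) (f : Fin m → Fin m → MvPolynomial (Fin m) ℤ) :
    ∏ p ∈ (Finset.univ : Finset (Fin m × Fin m)).filter (fun p => p.1 < p.2), f p.1 p.2
      = ∏ i : Fin m, ∏ j ∈ Ioi i, f i j := by
  rw [Finset.prod_sigma']
  refine Finset.prod_nbij' (fun p => ⟨p.1, p.2⟩) (fun p => (p.1, p.2)) ?_ ?_ ?_ ?_ ?_ <;>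
    simp [Finset.mem_sigma, Finset.mem_filter]

lemma vand_eq_det (m : ℕ) :
    vand m = Matrix.det (Matrix.vandermonde (fun i => (X (Fin.rev i) : MvPolynomial (Fin m) ℤ))) := by
  rw [Matrix.det_vandermonde, vand]
  rw [← pair_prod m (fun i j => X (Fin.rev j) - X (Fin.rev i))]
  refine Finset.prod_nbij' (fun p => (Fin.rev p.2, Fin.rev p.1)) (fun p => (Fin.rev p.2, Fin.rev p.1))
    ?_ ?_ ?_ ?_ ?_ <;> simp [Finset.mem_filter, Fin.rev_lt_rev]

def dF {m : ℕ} (ρ : Perm (Fin m)) : Fin m →₀ ℕ :=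
  Finsupp.equivFunOnFinite.symm (fun j => (ρ j : ℕ))

lemma prodXpow {m : ℕ} (c : Fin m → ℕ) :
    (∏ j, (X j : MvPolynomial (Fin m) ℤ) ^ c j)
      = monomial (Finsupp.equivFunOnFinite.symm c) 1 := by
  rw [← prod_X_pow_eq_monomial]
  refine (Finset.prod_subset (Finset.subset_univ _) ?_).symm
  intro x _ hx
  have : (Finsupp.equivFunOnFinite.symm c) x = 0 := by
    simpa using Finsupp.notMem_support_iff.mp hx
  simp only [Finsupp.coe_equivFunOnFinite_symm] at this ⊢
  simp [this]

def eps (m : ℕ) : ℤˣ := Perm.sign (Fin.revPerm : Perm (Fin m))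

lemma vand_expand (m : ℕ) :
    vand m = ∑ ρ : Perm (Fin m),
      C (((eps m * Perm.sign ρ : ℤˣ) : ℤ)) * monomial (dF ρ) 1 := by
  rw [vand_eq_det, Matrix.det_apply]
  refine Fintype.sum_bijective (fun σ : Perm (Fin m) => σ⁻¹ * Fin.revPerm)
    ((Group.mulRight_bijective _).comp (Equiv.inv (Perm (Fin m))).bijective) _ _ ?_
  intro σ
  have hsign : eps m * Perm.sign (σ⁻¹ * Fin.revPerm) = Perm.sign σ := by
    rw [map_mul, map_inv]
    have h1 : (Perm.sign σ)⁻¹ = Perm.sign σ := Int.units_inv_eq_self _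
    rw [h1, mul_comm (Perm.sign σ) _, ← mul_assoc, ← eps, Int.units_mul_self, one_mul]
  have hprod : (∏ i, Matrix.vandermonde (fun i => (X (Fin.rev i) : MvPolynomial (Fin m) ℤ)) (σ i) i)
      = monomial (dF (σ⁻¹ * Fin.revPerm)) 1 := by
    rw [dF, ← prodXpow]
    have := Equiv.prod_comp ((σ⁻¹ * Fin.revPerm : Perm (Fin m)) : Fin m ≃ Fin m)
      (fun i => Matrix.vandermonde (fun i => (X (Fin.rev i) : MvPolynomial (Fin m) ℤ)) (σ i) i)
    rw [← this]
    refine Finset.prod_congr rfl fun j _ => ?_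
    simp [Matrix.vandermonde_apply, Equiv.Perm.mul_apply]
  rw [hprod, hsign, Units.smul_def, MvPolynomial.smul_eq_C_mul]

def wt {n : ℕ} (A : Finset (Finset (Fin n))) (j : Fin n) : ℕ :=
  (A.filter (fun S => j ∈ S)).card

def wF {n : ℕ} (A : Finset (Finset (Fin n))) : Fin n →₀ ℕ :=
  Finsupp.equivFunOnFinite.symm (wt A)

lemma charEE_eq (n d r : ℕ) :
    charEE n d r = ∑ A ∈ ((Finset.univ : Finset (Fin n)).powersetCard r).powersetCard d,
      monomial (wF A) 1 := by
  rw [charEE, eSum]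
  refine Finset.sum_congr rfl fun A _ => ?_
  rw [wF, ← prodXpow]
  have h1 : ∀ S : Finset (Fin n), (∏ i ∈ S, (X i : MvPolynomial (Fin n) ℤ))
      = ∏ j, X j ^ (if j ∈ S then 1 else 0) := by
    intro S
    have : (∏ j, (X j : MvPolynomial (Fin n) ℤ) ^ (if j ∈ S then 1 else 0))
        = ∏ j, (if j ∈ S then (X j : MvPolynomial (Fin n) ℤ) else 1) := by
      refine Finset.prod_congr rfl fun j _ => ?_
      by_cases h : j ∈ S <;> simp [h]
    rw [this, ← Finset.prod_filter, Finset.filter_univ_mem]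
  calc (∏ S ∈ A, ∏ i ∈ S, (X i : MvPolynomial (Fin n) ℤ))
      = ∏ S ∈ A, ∏ j, X j ^ (if j ∈ S then 1 else 0) := Finset.prod_congr rfl fun S _ => h1 S
    _ = ∏ j, ∏ S ∈ A, (X j : MvPolynomial (Fin n) ℤ) ^ (if j ∈ S then 1 else 0) :=
        Finset.prod_comm
    _ = ∏ j, (X j : MvPolynomial (Fin n) ℤ) ^ (wt A j) := by
        refine Finset.prod_congr rfl fun j _ => ?_
        rw [Finset.prod_pow_eq_pow_sum]
        congr 1
        rw [wt, Finset.card_filter]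

lemma coeff_formula (n d r : ℕ) (e : Fin n → ℕ) :
    MvPolynomial.coeff (Finsupp.equivFunOnFinite.symm e) (vand n * charEE n d r)
      = (eps n : ℤ) * ∑ p ∈ ((((Finset.univ : Finset (Fin n)).powersetCard r).powersetCard d)
            ×ˢ (Finset.univ : Finset (Perm (Fin n)))).filter
            (fun p => ∀ j, ((p.2 j : ℕ) + wt p.1 j = e j)),
          ((Perm.sign p.2 : ℤˣ) : ℤ) := by
  rw [vand_expand, charEE_eq, Finset.sum_mul_sum]
  simp only [MvPolynomial.coeff_sum]
  have hterm : ∀ (ρ : Perm (Fin n)) (A : Finset (Finset (Fin n))),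
      MvPolynomial.coeff (Finsupp.equivFunOnFinite.symm e)
        ((C ((eps n * Perm.sign ρ : ℤˣ) : ℤ) * monomial (dF ρ) 1) * monomial (wF A) 1)
      = if (∀ j, ((ρ j : ℕ) + wt A j = e j))
          then ((eps n : ℤ) * ((Perm.sign ρ : ℤˣ) : ℤ)) else 0 := by
    intro ρ A
    rw [mul_assoc, monomial_mul, C_mul_monomial, mul_one, MvPolynomial.coeff_monomial]
    have hc : (dF ρ + wF A = Finsupp.equivFunOnFinite.symm e)
        ↔ (∀ j, ((ρ j : ℕ) + wt A j = e j)) := by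
      rw [DFunLike.ext_iff]
      refine forall_congr' fun j => ?_
      simp [dF, wF]
    rw [if_congr hc (by rw [Units.val_mul, mul_one]) rfl]
  calc (∑ ρ : Perm (Fin n), ∑ A ∈ ((Finset.univ : Finset (Fin n)).powersetCard r).powersetCard d,
        MvPolynomial.coeff (Finsupp.equivFunOnFinite.symm e)
          ((C ((eps n * Perm.sign ρ : ℤˣ) : ℤ) * monomial (dF ρ) 1) * monomial (wF A) 1))
      = ∑ A ∈ ((Finset.univ : Finset (Fin n)).powersetCard r).powersetCard d,
          ∑ ρ : Perm (Fin n),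
          (if (∀ j, ((ρ j : ℕ) + wt A j = e j))
            then ((eps n : ℤ) * ((Perm.sign ρ : ℤˣ) : ℤ)) else 0) := by
        rw [Finset.sum_comm]
        exact Finset.sum_congr rfl fun A _ => Finset.sum_congr rfl fun ρ _ => hterm ρ A
    _ = ∑ p ∈ (((Finset.univ : Finset (Fin n)).powersetCard r).powersetCard d
            ×ˢ (Finset.univ : Finset (Perm (Fin n)))),
          (if (∀ j, ((p.2 j : ℕ) + wt p.1 j = e j))
            then ((eps n : ℤ) * ((Perm.sign p.2 : ℤˣ) : ℤ)) else 0) := by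
        rw [Finset.sum_product]
    _ = _ := by
        rw [← Finset.sum_filter, Finset.mul_sum]
section UpDown
variable {n : ℕ} [NeZero n]

def up (T : Finset (Fin n)) : Finset (Fin n) := insert 0 (T.image (· + 1))
def down (S : Finset (Fin n)) : Finset (Fin n) := (S.erase 0).image (· - 1)

lemma mem_up {j : Fin n} {T : Finset (Fin n)} : j ∈ up T ↔ j = 0 ∨ j - 1 ∈ T := by
  simp only [up, Finset.mem_insert, Finset.mem_image]
  refine or_congr Iff.rfl ⟨?_, ?_⟩
  · rintro ⟨t, ht, rfl⟩; simpa [add_sub_cancel_right] using ht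
  · intro h; exact ⟨j - 1, h, sub_add_cancel j 1⟩

lemma mem_down {j : Fin n} {S : Finset (Fin n)} : j ∈ down S ↔ j + 1 ≠ 0 ∧ j + 1 ∈ S := by
  simp only [down, Finset.mem_image, Finset.mem_erase]
  constructor
  · rintro ⟨x, ⟨hx0, hxS⟩, rfl⟩
    rw [sub_add_cancel]; exact ⟨hx0, hxS⟩
  · rintro ⟨h0, hS⟩; exact ⟨j + 1, ⟨h0, hS⟩, add_sub_cancel_right j 1⟩

lemma zero_not_mem_image {T : Finset (Fin n)} (h : (-1 : Fin n) ∉ T) :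
    (0 : Fin n) ∉ T.image (· + 1) := by
  intro hc
  obtain ⟨t, ht, h0⟩ := Finset.mem_image.mp hc
  exact h (eq_neg_of_add_eq_zero_left h0 ▸ ht)

lemma sub_one_inj : Function.Injective (fun x : Fin n => x - 1) := by
  intro a b h
  have := congrArg (· + 1) h
  simpa [sub_add_cancel] using this

lemma up_card {T : Finset (Fin n)} (h : (-1 : Fin n) ∉ T) : (up T).card = T.card + 1 := by
  rw [up, Finset.card_insert_of_notMem (zero_not_mem_image h),
    Finset.card_image_of_injective _ (add_left_injective 1)]

lemma down_card {S : Finset (Fin n)} (h : (0 : Fin n) ∈ S) : (down S).card = S.card - 1 := by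
  rw [down, Finset.card_image_of_injective _ sub_one_inj, Finset.card_erase_of_mem h]

lemma down_up {T : Finset (Fin n)} (h : (-1 : Fin n) ∉ T) : down (up T) = T := by
  rw [up, down, Finset.erase_insert (zero_not_mem_image h), Finset.image_image]
  rw [show ((fun x : Fin n => x - 1) ∘ (· + 1)) = id from funext fun x => add_sub_cancel_right x 1,
    Finset.image_id]

lemma up_down {S : Finset (Fin n)} (h : (0 : Fin n) ∈ S) : up (down S) = S := by
  rw [down, up, Finset.image_image,
    show ((· + 1) ∘ (fun x : Fin n => x - 1)) = id from funext fun x => sub_add_cancel x 1,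
    Finset.image_id, Finset.insert_erase h]

end UpDown

def good (n d r : ℕ) (e : Fin n → ℕ) : Finset (Finset (Finset (Fin n)) × Perm (Fin n)) :=
  (((((Finset.univ : Finset (Fin n)).powersetCard r).powersetCard d))
      ×ˢ (Finset.univ : Finset (Perm (Fin n)))).filter
    (fun p => ∀ j, ((p.2 j : ℕ) + wt p.1 j = e j))

section KeySec
variable {n : ℕ} [NeZero n]

lemma forceL {d k : ℕ} (lam : ℕ → ℕ) (hfirst : lam 0 = d)
    {p : Finset (Finset (Fin n)) × Perm (Fin n)}
    (hp : p ∈ good n d k (fun j => lam (j : ℕ) + (n - 1 - (j : ℕ)))) :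
    (∀ S ∈ p.1, (0 : Fin n) ∈ S) ∧ p.2 0 = -1 ∧ p.1.card = d ∧ (∀ S ∈ p.1, S.card = k) := by
  obtain ⟨hmem, hcond⟩ := Finset.mem_filter.mp hp
  obtain ⟨hA, -⟩ := Finset.mem_product.mp hmem
  obtain ⟨hAsub, hAcard⟩ := Finset.mem_powersetCard.mp hA
  have hSk : ∀ S ∈ p.1, S.card = k := fun S hS => (Finset.mem_powersetCard.mp (hAsub hS)).2
  have h0 : ((p.2 0 : Fin n) : ℕ) + wt p.1 0 = lam 0 + (n - 1 - 0) := hcond 0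
  have hv : ((p.2 0 : Fin n) : ℕ) < n := Fin.is_lt _
  have hw : wt p.1 0 ≤ d := by rw [← hAcard]; exact Finset.card_filter_le _ _
  rw [hfirst] at h0
  have hn1 : 0 < n := Nat.pos_of_ne_zero (NeZero.ne n)
  have hkey : wt p.1 0 = d ∧ ((p.2 0 : Fin n) : ℕ) = n - 1 := by omega
  have hfil : p.1.filter (fun S => (0 : Fin n) ∈ S) = p.1 :=
    Finset.eq_of_subset_of_card_le (Finset.filter_subset _ _)
      (by rw [hAcard]; exact le_of_eq (hkey.1).symm)
  refine ⟨fun S hS => (Finset.mem_filter.mp (hfil ▸ hS : S ∈ _)).2, ?_, hAcard, hSk⟩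
  exact Fin.ext (by rw [hkey.2, negOneVal])

lemma forceR {d k : ℕ} (lam : ℕ → ℕ) (hsupp : lam n = 0)
    {q : Finset (Finset (Fin n)) × Perm (Fin n)}
    (hq : q ∈ good n d k (fun j => lam ((j : ℕ) + 1) + (n - 1 - (j : ℕ)))) :
    (∀ T ∈ q.1, (-1 : Fin n) ∉ T) ∧ q.2 (-1) = 0 ∧ q.1.card = d ∧ (∀ T ∈ q.1, T.card = k) := by
  obtain ⟨hmem, hcond⟩ := Finset.mem_filter.mp hq
  obtain ⟨hA, -⟩ := Finset.mem_product.mp hmem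
  obtain ⟨hAsub, hAcard⟩ := Finset.mem_powersetCard.mp hA
  have hSk : ∀ T ∈ q.1, T.card = k := fun T hT => (Finset.mem_powersetCard.mp (hAsub hT)).2
  have hn1 : 0 < n := Nat.pos_of_ne_zero (NeZero.ne n)
  have h0 : ((q.2 (-1) : Fin n) : ℕ) + wt q.1 (-1)
      = lam (((-1 : Fin n) : ℕ) + 1) + (n - 1 - ((-1 : Fin n) : ℕ)) := hcond (-1)
  rw [negOneVal, show n - 1 + 1 = n by omega, hsupp, Nat.sub_self, Nat.add_zero] at h0
  have hw : wt q.1 (-1) = 0 ∧ ((q.2 (-1) : Fin n) : ℕ) = 0 := by omega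
  have hfil : q.1.filter (fun T => (-1 : Fin n) ∈ T) = ∅ := Finset.card_eq_zero.mp hw.1
  refine ⟨fun T hT hc => ?_, Fin.ext (by rw [hw.2]; rfl), hAcard, hSk⟩
  have : T ∈ q.1.filter (fun T => (-1 : Fin n) ∈ T) := Finset.mem_filter.mpr ⟨hT, hc⟩
  rw [hfil] at this
  exact absurd this (Finset.notMem_empty T)

end KeySec

lemma key {n : ℕ} [NeZero n] (d k : ℕ) (hk : 1 ≤ k) (lam : ℕ → ℕ)
    (hfirst : lam 0 = d) (hsupp : lam n = 0) :
    ∑ p ∈ good n d k (fun j => lam (j : ℕ) + (n - 1 - (j : ℕ))),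
        ((Perm.sign p.2 : ℤˣ) : ℤ)
      = ∑ p ∈ good n d (k - 1) (fun j => lam ((j : ℕ) + 1) + (n - 1 - (j : ℕ))),
          ((Perm.sign p.2 : ℤˣ) : ℤ) := by
  have hn1 : 0 < n := Nat.pos_of_ne_zero (NeZero.ne n)
  set cp : Perm (Fin n) := Equiv.addRight (1 : Fin n) with hcpdef
  set cm : Perm (Fin n) := Equiv.subRight (1 : Fin n) with hcmdef
  have hmulpm : cp * cm = 1 := Equiv.ext fun x => sub_add_cancel x 1
  have hmulmp : cm * cp = 1 := Equiv.ext fun x => add_sub_cancel_right x 1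
  refine Finset.sum_nbij' (fun p => (p.1.image down, cp * p.2 * cp))
    (fun q => (q.1.image up, cm * q.2 * cm)) ?_ ?_ ?_ ?_ ?_
  · -- hi : maps goodL into goodR
    intro p hp
    obtain ⟨h0S, hρ0, hcard, hSk⟩ := forceL lam hfirst hp
    obtain ⟨hmem, hcond⟩ := Finset.mem_filter.mp hp
    have hinj : Set.InjOn down (p.1 : Set (Finset (Fin n))) := by
      intro S hS S' hS' h
      have h2 := congrArg up h
      rwa [up_down (h0S S hS), up_down (h0S S' hS')] at h2
    rw [good, Finset.mem_filter]
    constructor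
    · rw [Finset.mem_product]
      refine ⟨Finset.mem_powersetCard.mpr ⟨?_, ?_⟩, Finset.mem_univ _⟩
      · intro B hB
        obtain ⟨S, hS, rfl⟩ := Finset.mem_image.mp hB
        exact Finset.mem_powersetCard.mpr ⟨Finset.subset_univ _,
          by rw [down_card (h0S S hS), hSk S hS]⟩
      · rw [Finset.card_image_of_injOn hinj, hcard]
    · intro j
      by_cases hjneg : j = -1
      · subst hjneg
        have hperm : (cp * p.2 * cp) (-1) = 0 := by
          have h1 : (cp * p.2 * cp) (-1 : Fin n) = p.2 ((-1 : Fin n) + 1) + 1 := rfl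
          rw [h1, neg_add_cancel, hρ0, neg_add_cancel]
        have hwt : wt (p.1.image down) (-1) = 0 := by
          rw [wt, Finset.card_eq_zero, Finset.filter_eq_empty_iff]
          intro B hB
          obtain ⟨S, hS, rfl⟩ := Finset.mem_image.mp hB
          rw [mem_down]
          simp
        show ((cp * p.2 * cp) (-1) : ℕ) + wt (p.1.image down) (-1)
            = lam (((-1 : Fin n) : ℕ) + 1) + (n - 1 - ((-1 : Fin n) : ℕ))
        rw [hperm, hwt, negOneVal, show n - 1 + 1 = n from by omega, hsupp]
        simp
      · have hm0 : j + 1 ≠ 0 := fun hc => hjneg (eq_neg_of_add_eq_zero_left hc)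
        have hperm : (cp * p.2 * cp) j = p.2 (j + 1) + 1 := rfl
        have hρm : p.2 (j + 1) ≠ -1 := fun hc => hm0 (p.2.injective (hc.trans hρ0.symm))
        have hval : ((p.2 (j + 1) + 1 : Fin n) : ℕ) = ((p.2 (j + 1) : Fin n) : ℕ) + 1 :=
          valAddOne hρm
        have hwt : wt (p.1.image down) j = wt p.1 (j + 1) := by
          rw [wt, Finset.filter_image,
            show (p.1.filter fun S => j ∈ down S) = p.1.filter (fun S => (j + 1) ∈ S) from
              Finset.filter_congr (fun S hS => by rw [mem_down]; simp [hm0]),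
            Finset.card_image_of_injOn
              (hinj.mono (Finset.coe_subset.mpr (Finset.filter_subset _ _)))]
          rfl
        have hcondm : ((p.2 (j + 1) : Fin n) : ℕ) + wt p.1 (j + 1)
            = lam ((j + 1 : Fin n) : ℕ) + (n - 1 - ((j + 1 : Fin n) : ℕ)) := hcond (j + 1)
        have hjv : ((j + 1 : Fin n) : ℕ) = (j : ℕ) + 1 := valAddOne hjneg
        have hjne : (j : ℕ) ≠ n - 1 := fun hc => hjneg (Fin.ext (by rw [negOneVal]; exact hc))
        have hjlt : (j : ℕ) < n := j.isLt
        show ((cp * p.2 * cp) j : ℕ) + wt (p.1.image down) j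
            = lam ((j : ℕ) + 1) + (n - 1 - (j : ℕ))
        rw [hperm, hval, hwt]
        rw [hjv] at hcondm
        omega
  · -- hj : maps goodR into goodL
    intro q hq
    obtain ⟨hlT, hρ0, hcard, hTk⟩ := forceR lam hsupp hq
    obtain ⟨hmem, hcond⟩ := Finset.mem_filter.mp hq
    have hinj : Set.InjOn up (q.1 : Set (Finset (Fin n))) := by
      intro T hT T' hT' h
      have h2 := congrArg down h
      rwa [down_up (hlT T hT), down_up (hlT T' hT')] at h2
    rw [good, Finset.mem_filter]
    constructor
    · rw [Finset.mem_product]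
      refine ⟨Finset.mem_powersetCard.mpr ⟨?_, ?_⟩, Finset.mem_univ _⟩
      · intro B hB
        obtain ⟨T, hT, rfl⟩ := Finset.mem_image.mp hB
        refine Finset.mem_powersetCard.mpr ⟨Finset.subset_univ _, ?_⟩
        rw [up_card (hlT T hT), hTk T hT]
        omega
      · rw [Finset.card_image_of_injOn hinj, hcard]
    · intro j
      by_cases hj0 : j = 0
      · subst hj0
        have hperm : (cm * q.2 * cm) 0 = -1 := by
          have h1 : (cm * q.2 * cm) (0 : Fin n) = q.2 ((0 : Fin n) - 1) - 1 := rfl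
          rw [h1, zero_sub, hρ0, zero_sub]
        have hwt : wt (q.1.image up) 0 = d := by
          rw [wt, Finset.filter_true_of_mem (fun B hB => ?_),
            Finset.card_image_of_injOn hinj, hcard]
          obtain ⟨T, hT, rfl⟩ := Finset.mem_image.mp hB
          exact Finset.mem_insert_self 0 _
        show ((cm * q.2 * cm) 0 : ℕ) + wt (q.1.image up) 0
            = lam ((0 : Fin n) : ℕ) + (n - 1 - ((0 : Fin n) : ℕ))
        rw [hperm, hwt, negOneVal]
        show n - 1 + d = lam 0 + (n - 1 - 0)
        rw [hfirst]
        omega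
      · have hm : j - 1 ≠ -1 := fun hc => hj0 (by
          have h2 := congrArg (· + 1) hc
          simpa [sub_add_cancel, neg_add_cancel] using h2)
        have hperm : (cm * q.2 * cm) j = q.2 (j - 1) - 1 := rfl
        have hρm : q.2 (j - 1) ≠ 0 := fun hc => hm (q.2.injective (hc.trans hρ0.symm))
        have hval : ((q.2 (j - 1) - 1 : Fin n) : ℕ) = ((q.2 (j - 1) : Fin n) : ℕ) - 1 :=
          valSubOne hρm
        have hρge : 1 ≤ ((q.2 (j - 1) : Fin n) : ℕ) := by
          have h2 : ((q.2 (j - 1) : Fin n) : ℕ) ≠ 0 := fun hc => hρm (Fin.ext hc)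
          omega
        have hwt : wt (q.1.image up) j = wt q.1 (j - 1) := by
          rw [wt, Finset.filter_image,
            show (q.1.filter fun T => j ∈ up T) = q.1.filter (fun T => (j - 1) ∈ T) from
              Finset.filter_congr (fun T hT => by rw [mem_up]; simp [hj0]),
            Finset.card_image_of_injOn
              (hinj.mono (Finset.coe_subset.mpr (Finset.filter_subset _ _)))]
          rfl
        have hcondm : ((q.2 (j - 1) : Fin n) : ℕ) + wt q.1 (j - 1)
            = lam (((j - 1 : Fin n) : ℕ) + 1) + (n - 1 - ((j - 1 : Fin n) : ℕ)) := hcond (j - 1)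
        have hjv : ((j : Fin n) : ℕ) = ((j - 1 : Fin n) : ℕ) + 1 := by
          conv_lhs => rw [← sub_add_cancel j 1]
          exact valAddOne hm
        have hmlt : ((j - 1 : Fin n) : ℕ) ≠ n - 1 :=
          fun hc => hm (Fin.ext (by rw [negOneVal]; exact hc))
        have hmlt2 : ((j - 1 : Fin n) : ℕ) < n := (j - 1 : Fin n).isLt
        show ((cm * q.2 * cm) j : ℕ) + wt (q.1.image up) j
            = lam ((j : ℕ)) + (n - 1 - (j : ℕ))
        rw [hperm, hval, hwt, hjv]
        omega
  · -- left inverse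
    intro p hp
    obtain ⟨h0S, -, -, -⟩ := forceL lam hfirst hp
    have h1 : (p.1.image down).image up = p.1 := by
      rw [Finset.image_image]
      calc p.1.image (up ∘ down)
          = p.1.image id := Finset.image_congr (fun S hS => up_down (h0S S hS))
        _ = p.1 := Finset.image_id
    have h2 : cm * (cp * p.2 * cp) * cm = p.2 := by
      have h3 : cm * (cp * p.2 * cp) * cm = (cm * cp) * p.2 * (cp * cm) := by group
      rw [h3, hmulmp, hmulpm, one_mul, mul_one]
    exact Prod.ext h1 h2
  · -- right inverse
    intro q hq
    obtain ⟨hlT, -, -, -⟩ := forceR lam hsupp hq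
    have h1 : (q.1.image up).image down = q.1 := by
      rw [Finset.image_image]
      calc q.1.image (down ∘ up)
          = q.1.image id := Finset.image_congr (fun T hT => down_up (hlT T hT))
        _ = q.1 := Finset.image_id
    have h2 : cp * (cm * q.2 * cm) * cp = q.2 := by
      have h3 : cp * (cm * q.2 * cm) * cp = (cp * cm) * q.2 * (cm * cp) := by group
      rw [h3, hmulpm, hmulmp, one_mul, mul_one]
    exact Prod.ext h1 h2
  · -- signs agree
    intro p hp
    have h1 : Perm.sign (cp * p.2 * cp) = Perm.sign p.2 := by
      rw [map_mul, map_mul, mul_comm (Perm.sign cp) (Perm.sign p.2), mul_assoc,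
        Int.units_mul_self, mul_one]
    rw [h1]

/-- Reduction Lemma: if `λ ⊢ dk` has exactly `d` columns and `λ'` is `λ` with its first
row removed, then the multiplicity of `S^λ` in `Λ^d(Λ^k W)` equals the multiplicity of
`S^{λ'}` in `Λ^d(Λ^{k−1} W)`. -/
theorem reduction_lemma_wedge (d k n : ℕ) (hd : 1 ≤ d) (hk : 1 ≤ k) (hn : d * k ≤ n)
    (lam : ℕ → ℕ) (hanti : ∀ i j : ℕ, i ≤ j → lam j ≤ lam i)
    (hfirst : lam 0 = d) (hsupp : ∀ i : ℕ, n ≤ i → lam i = 0)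
    (hsum : ∑ i ∈ Finset.range n, lam i = d * k) :
    coeffOf (fun j : Fin n => lam (j : ℕ) + (n - 1 - (j : ℕ)))
        (vand n * charEE n d k)
      = coeffOf (fun j : Fin n => lam ((j : ℕ) + 1) + (n - 1 - (j : ℕ)))
          (vand n * charEE n d (k - 1)) := by
  have h1 : 1 ≤ d * k := by
    have h2 := Nat.mul_le_mul hd hk
    simpa using h2
  haveI : NeZero n := ⟨by omega⟩
  rw [coeffOf, coeffOf, coeff_formula, coeff_formula]
  congr 1
  exact key d k hk lam hfirst (hsupp n le_rfl)
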